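/- Let T be a static attack tree, i.e., a finite rooted DAG where each leaf is labeled BAS and each internal node is labeled OR or AND, with durations d : BAS → ℝ≥0. Define the bottom-up value BU(v) recursively: BU(a) = d(a) for a BAS a, BU(v) = min over children v' of BU(v') if v is an OR node, and BU(v) = max over children v' of BU(v') if v is an AND node. Define the semantics: a set A of BASes reaches a BAS a iff a ∈ A; reaches an OR node iff it reaches some child; reaches an AND node iff it reaches all children. Then BU(root) = min over all A ⊆ BAS that reach the root of (max over a ∈ A of d(a)). -/

import Mathlib

open scoped ENNReal

/-- A dynamic attack tree: leaves are basic attack steps (BAS), internal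
nodes are OR / AND / SAND gates with a list of children (ordered, which
matters for SAND).  DAG-sharing is modelled by shared BAS labels /
shared subterms. -/
inductive DAT (α : Type) : Type
  | bas (a : α) : DAT α
  | or (cs : List (DAT α)) : DAT α
  | and (cs : List (DAT α)) : DAT α
  | sand (cs : List (DAT α)) : DAT α

namespace DAT

variable {α : Type}

/-- `IsBasDesc v a` : the BAS `a` is a descendant of node `v` (i.e. `a ∈ B_v`). -/
inductive IsBasDesc : DAT α → α → Prop
  | bas (a : α) : IsBasDesc (.bas a) a
  | or {cs : List (DAT α)} {c : DAT α} {a : α} : c ∈ cs → IsBasDesc c a → IsBasDesc (.or cs) a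
  | and {cs : List (DAT α)} {c : DAT α} {a : α} : c ∈ cs → IsBasDesc c a → IsBasDesc (.and cs) a
  | sand {cs : List (DAT α)} {c : DAT α} {a : α} : c ∈ cs → IsBasDesc c a → IsBasDesc (.sand cs) a

/-- `Subnode v T` : `v` is a node of the DAT `T` (a subterm). -/
inductive Subnode : DAT α → DAT α → Prop
  | refl (t : DAT α) : Subnode t t
  | or {v c : DAT α} {cs : List (DAT α)} : c ∈ cs → Subnode v c → Subnode v (.or cs)
  | and {v c : DAT α} {cs : List (DAT α)} : c ∈ cs → Subnode v c → Subnode v (.and cs)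
  | sand {v c : DAT α} {cs : List (DAT α)} : c ∈ cs → Subnode v c → Subnode v (.sand cs)

/-- `Reaches A r v` : the attack given by the set `A` of activated BASes and
the strict order `r` on them reaches node `v`. -/
inductive Reaches (A : Set α) (r : α → α → Prop) : DAT α → Prop
  | bas {a : α} : a ∈ A → Reaches A r (.bas a)
  | or {cs : List (DAT α)} {c : DAT α} : c ∈ cs → Reaches A r c → Reaches A r (.or cs)
  | and {cs : List (DAT α)} : (∀ c ∈ cs, Reaches A r c) → Reaches A r (.and cs)
  | sand {cs : List (DAT α)} :
      (∀ c ∈ cs, Reaches A r c) →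
      (∀ i, (h : i + 1 < cs.length) → ∀ a a', a ∈ A → a' ∈ A →
        IsBasDesc (cs.get ⟨i, Nat.lt_of_succ_lt h⟩) a →
        IsBasDesc (cs.get ⟨i + 1, h⟩) a' → r a a') →
      Reaches A r (.sand cs)

end DAT

/-- An attack: a finite set of BASes together with a strict partial order on it. -/
structure Attack (α : Type) where
  carrier : Finset α
  lt : α → α → Prop
  lt_mem : ∀ {a b : α}, lt a b → a ∈ carrier ∧ b ∈ carrier
  lt_irrefl : ∀ a, ¬ lt a a
  lt_trans : ∀ {a b c : α}, lt a b → lt b c → lt a c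

namespace Attack

variable {α : Type}

/-- The order on attacks: inclusion of carriers and of order relations. -/
def le (O O' : Attack α) : Prop :=
  O.carrier ⊆ O'.carrier ∧ ∀ a b, O.lt a b → O'.lt a b

end Attack

namespace DAT

variable {α : Type}

/-- A maximal chain of the strict poset with carrier `A` and order `r`. -/
def MaxChain (A : Set α) (r : α → α → Prop) (C : Finset α) : Prop :=
  ↑C ⊆ A ∧ IsChain r ↑C ∧
    ∀ C' : Finset α, ↑C' ⊆ A → IsChain r ↑C' → C ⊆ C' → C' = C

/-- Duration `t(O, d)` of an attack: the maximum over maximal chains of the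
sum of the durations. -/
noncomputable def dur (A : Set α) (r : α → α → Prop) (d : α → ℝ≥0∞) : ℝ≥0∞ :=
  ⨆ C ∈ {C : Finset α | MaxChain A r C}, ∑ a ∈ C, d a

/-- An attack is successful on `T` if it reaches the root of `T`. -/
def Successful (O : Attack α) (T : DAT α) : Prop :=
  Reaches (↑O.carrier) O.lt T

/-- Min time: the infimum of the durations of successful attacks (`∞` if there
are none). -/
noncomputable def mt (T : DAT α) (d : α → ℝ≥0∞) : ℝ≥0∞ :=
  ⨅ O ∈ {O : Attack α | Successful O T}, dur (↑O.carrier) O.lt d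

end DAT

namespace DAT

variable {α : Type}

/-- The bottom-up algorithm MT-BU. -/
noncomputable def BU (d : α → ℝ≥0∞) : DAT α → ℝ≥0∞
  | .bas a => d a
  | .or cs => (cs.attach.map (fun c => BU d c.1)).foldr min ⊤
  | .and cs => (cs.attach.map (fun c => BU d c.1)).foldr max 0
  | .sand cs => (cs.attach.map (fun c => BU d c.1)).sum
  decreasing_by all_goals (simp_wf; have := List.sizeOf_lt_of_mem c.2; omega)

/-- A static attack tree: no SAND gates. -/
inductive IsStatic : DAT α → Prop
  | bas (a : α) : IsStatic (.bas a)
  | or {cs : List (DAT α)} : (∀ c ∈ cs, IsStatic c) → IsStatic (.or cs)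
  | and {cs : List (DAT α)} : (∀ c ∈ cs, IsStatic c) → IsStatic (.and cs)

/-- Reachability for a plain set of BASes (static semantics, no order needed). -/
inductive ReachSet (A : Set α) : DAT α → Prop
  | bas {a : α} : a ∈ A → ReachSet A (.bas a)
  | or {cs : List (DAT α)} {c : DAT α} : c ∈ cs → ReachSet A c → ReachSet A (.or cs)
  | and {cs : List (DAT α)} : (∀ c ∈ cs, ReachSet A c) → ReachSet A (.and cs)

/-- List of the BAS labels occurring in a DAT, with multiplicity. -/
def basList : DAT α → List α
  | .bas a => [a]
  | .or cs => (cs.attach.map (fun c => basList c.1)).flatten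
  | .and cs => (cs.attach.map (fun c => basList c.1)).flatten
  | .sand cs => (cs.attach.map (fun c => basList c.1)).flatten
  decreasing_by all_goals (simp_wf; have := List.sizeOf_lt_of_mem c.2; omega)

/-- The "bad" condition forcing a SAND node to `∞`: some child is not reached,
or some pair of BASes of consecutive children violates the ordering constraint. -/
def SandBad (d : α → ℝ≥0∞) (f : DAT α → ℝ≥0∞) (cs : List (DAT α)) : Prop :=
  (∃ c ∈ cs, f c = ⊤) ∨
    ∃ i, ∃ h : i + 1 < cs.length, ∃ a a',
      IsBasDesc (cs.get ⟨i, Nat.lt_of_succ_lt h⟩) a ∧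
      IsBasDesc (cs.get ⟨i + 1, h⟩) a' ∧
      f (.bas a') - d a' < f (.bas a) ∧ f (.bas a) < ⊤

/-- Local time-assignment constraints at a node. -/
def LocalTA (d : α → ℝ≥0∞) (f : DAT α → ℝ≥0∞) : DAT α → Prop
  | .bas a => d a ≤ f (.bas a)
  | .or cs => (⨅ c ∈ cs, f c) ≤ f (.or cs)
  | .and cs => (⨆ c ∈ cs, f c) ≤ f (.and cs)
  | .sand cs =>
      (∀ c, cs.getLast? = some c → f c ≤ f (.sand cs)) ∧
      (SandBad d f cs → f (.sand cs) = ⊤)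

/-- Local exact time-assignment constraints at a node. -/
def LocalExact (d : α → ℝ≥0∞) (f : DAT α → ℝ≥0∞) : DAT α → Prop
  | .bas a => d a ≤ f (.bas a)
  | .or cs => f (.or cs) = ⨅ c ∈ cs, f c
  | .and cs => f (.and cs) = ⨆ c ∈ cs, f c
  | .sand cs =>
      (SandBad d f cs → f (.sand cs) = ⊤) ∧
      (¬ SandBad d f cs → ∀ c, cs.getLast? = some c → f (.sand cs) = f c)

/-- `f` is a time assignment for `T`. -/
def IsTA (d : α → ℝ≥0∞) (f : DAT α → ℝ≥0∞) (T : DAT α) : Prop :=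
  ∀ v, Subnode v T → LocalTA d f v

/-- `f` is an exact time assignment for `T`. -/
def IsExactTA (d : α → ℝ≥0∞) (f : DAT α → ℝ≥0∞) (T : DAT α) : Prop :=
  ∀ v, Subnode v T → LocalExact d f v

end DAT

namespace DAT

variable {α : Type}

lemma reachSet_mono {A B : Set α} (h : A ⊆ B) {T : DAT α} (hr : ReachSet A T) :
    ReachSet B T := by
  induction hr with
  | bas ha => exact .bas (h ha)
  | or hc _ ih => exact .or hc ih
  | and _ ih => exact .and ih

lemma attach_map_eq (cs : List (DAT α)) (f : DAT α → ℝ≥0∞) :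
    cs.attach.map (fun c => f c.1) = cs.map f := by
  simp

lemma BU_bas (d : α → ℝ≥0∞) (a : α) : BU d (.bas a) = d a := by
  rw [BU]

lemma BU_or (d : α → ℝ≥0∞) (cs : List (DAT α)) :
    BU d (.or cs) = (cs.map (BU d)).foldr min ⊤ := by
  rw [BU, attach_map_eq]

lemma BU_and (d : α → ℝ≥0∞) (cs : List (DAT α)) :
    BU d (.and cs) = (cs.map (BU d)).foldr max 0 := by
  rw [BU, attach_map_eq]

lemma foldr_min_le {l : List ℝ≥0∞} {x : ℝ≥0∞} (hx : x ∈ l) : l.foldr min ⊤ ≤ x := by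
  induction l with
  | nil => simp at hx
  | cons a l ih =>
    rcases List.mem_cons.mp hx with rfl | hx
    · exact min_le_left _ _
    · exact le_trans (min_le_right _ _) (ih hx)

lemma le_foldr_max {l : List ℝ≥0∞} {x : ℝ≥0∞} (hx : x ∈ l) : x ≤ l.foldr max 0 := by
  induction l with
  | nil => simp at hx
  | cons a l ih =>
    rcases List.mem_cons.mp hx with rfl | hx
    · exact le_max_left _ _
    · exact le_trans (ih hx) (le_max_right _ _)

lemma foldr_max_le {l : List ℝ≥0∞} {b : ℝ≥0∞} (h : ∀ x ∈ l, x ≤ b) :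
    l.foldr max 0 ≤ b := by
  induction l with
  | nil => simp
  | cons a l ih =>
    exact max_le (h a (List.mem_cons_self)) (ih fun x hx => h x (List.mem_cons_of_mem _ hx))

lemma foldr_min_cases (l : List ℝ≥0∞) :
    l.foldr min ⊤ = ⊤ ∨ ∃ x ∈ l, l.foldr min ⊤ = x := by
  induction l with
  | nil => left; rfl
  | cons a l ih =>
    rcases ih with htop | ⟨x, hx, hex⟩
    · right
      refine ⟨a, List.mem_cons_self, ?_⟩
      simp [List.foldr_cons, htop]
    · rcases le_total a x with h | h
      · right
        refine ⟨a, List.mem_cons_self, ?_⟩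
        simp [List.foldr_cons, hex, min_eq_left h]
      · right
        refine ⟨x, List.mem_cons_of_mem _ hx, ?_⟩
        simp [List.foldr_cons, hex, min_eq_right h]

lemma BU_le_sup (d : α → ℝ≥0∞) {A : Finset α} {T : DAT α}
    (h : ReachSet (↑A) T) : BU d T ≤ ⨆ a ∈ A, d a := by
  induction h with
  | @bas a ha =>
    rw [BU_bas]
    exact le_biSup _ ha
  | @or cs c hc _ ih =>
    rw [BU_or]
    exact le_trans (foldr_min_le (List.mem_map_of_mem (f := BU d) hc)) ih
  | @and cs _ ih =>
    rw [BU_and]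
    apply foldr_max_le
    intro x hx
    obtain ⟨c, hc, rfl⟩ := List.mem_map.mp hx
    exact ih c hc

lemma union_witness (d : α → ℝ≥0∞) (cs : List (DAT α))
    (h : ∀ c ∈ cs, ∃ A : Finset α, (↑A : Set α) ⊆ {a | IsBasDesc c a} ∧
      ReachSet (↑A) c ∧ (⨆ a ∈ A, d a) ≤ BU d c) :
    ∃ A : Finset α, (∀ a ∈ A, ∃ c ∈ cs, IsBasDesc c a) ∧
      (∀ c ∈ cs, ReachSet (↑A) c) ∧
      (⨆ a ∈ A, d a) ≤ (cs.map (BU d)).foldr max 0 := by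
  classical
  induction cs with
  | nil =>
    refine ⟨∅, by simp, by simp, by simp⟩
  | cons c cs ih =>
    obtain ⟨A, hAsub, hAr, hAle⟩ := h c (List.mem_cons_self)
    obtain ⟨B, hBsub, hBr, hBle⟩ := ih fun c' hc' => h c' (List.mem_cons_of_mem _ hc')
    refine ⟨A ∪ B, ?_, ?_, ?_⟩
    · intro a ha
      rcases Finset.mem_union.mp ha with ha | ha
      · exact ⟨c, List.mem_cons_self, hAsub ha⟩
      · obtain ⟨c', hc', hd⟩ := hBsub a ha
        exact ⟨c', List.mem_cons_of_mem _ hc', hd⟩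
    · intro c' hc'
      rcases List.mem_cons.mp hc' with rfl | hc'
      · exact reachSet_mono (by intro a ha; exact Finset.mem_union_left _ ha) hAr
      · exact reachSet_mono (by intro a ha; exact Finset.mem_union_right _ ha) (hBr c' hc')
    · rw [Finset.iSup_union]
      simp only [List.map_cons, List.foldr_cons]
      exact sup_le_sup hAle hBle

lemma exists_witness (d : α → ℝ≥0∞) {T : DAT α} (hT : IsStatic T) :
    BU d T = ⊤ ∨ ∃ A : Finset α, (↑A : Set α) ⊆ {a | IsBasDesc T a} ∧
      ReachSet (↑A) T ∧ (⨆ a ∈ A, d a) ≤ BU d T := by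
  induction hT with
  | bas a =>
    right
    refine ⟨{a}, ?_, .bas (by simp), ?_⟩
    · intro x hx
      simp only [Finset.coe_singleton, Set.mem_singleton_iff] at hx
      subst hx
      exact IsBasDesc.bas _
    · simp [BU_bas]
  | @or cs _ ih =>
    rw [BU_or]
    rcases foldr_min_cases (cs.map (BU d)) with htop | ⟨x, hx, hex⟩
    · left; exact htop
    · obtain ⟨c, hc, rfl⟩ := List.mem_map.mp hx
      rcases ih c hc with htop | ⟨A, hsub, hr, hle⟩
      · left; rw [hex, htop]
      · right
        refine ⟨A, fun a ha => IsBasDesc.or hc (hsub ha), .or hc hr, hex ▸ hle⟩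
  | @and cs h ih =>
    by_cases htop : ∃ c ∈ cs, BU d c = ⊤
    · left
      obtain ⟨c, hc, hct⟩ := htop
      rw [BU_and]
      have := le_foldr_max (List.mem_map_of_mem (f := BU d) hc)
      rw [hct] at this
      exact top_le_iff.mp this
    · push_neg at htop
      right
      have hw : ∀ c ∈ cs, ∃ A : Finset α, (↑A : Set α) ⊆ {a | IsBasDesc c a} ∧
          ReachSet (↑A) c ∧ (⨆ a ∈ A, d a) ≤ BU d c :=
        fun c hc => (ih c hc).resolve_left (htop c hc)
      obtain ⟨A, hsub, hr, hle⟩ := union_witness d cs hw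
      refine ⟨A, ?_, .and hr, by rw [BU_and]; exact hle⟩
      intro a ha
      obtain ⟨c, hc, hd⟩ := hsub a ha
      exact IsBasDesc.and hc hd

end DAT

/-- on a (possibly DAG-shaped) static attack tree, the bottom-up
algorithm computes the min time. -/
theorem stmt3 {α : Type} (T : DAT α) (hT : DAT.IsStatic T) (d : α → ℝ≥0∞)
    (hd : ∀ a, d a ≠ ⊤) :
    DAT.BU d T =
      ⨅ A ∈ {A : Finset α | (↑A : Set α) ⊆ {a | DAT.IsBasDesc T a} ∧
        DAT.ReachSet (↑A) T}, ⨆ a ∈ A, d a := by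
  apply le_antisymm
  · exact le_iInf₂ fun A hA => DAT.BU_le_sup d hA.2
  · rcases DAT.exists_witness d hT with htop | ⟨A, hsub, hr, hle⟩
    · rw [htop]; exact le_top
    · exact iInf₂_le_of_le A ⟨hsub, hr⟩ hle
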